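/- Let c : ℝ → ℝ be a differentiable, strictly increasing bijection with c' > 0 everywhere whose derivative c' is strictly increasing (c strictly convex), and let q ∈ (0,1). Define ℓ_B(σ) = c⁻¹(c(σ) − 1) and ℓ_A(σ) = c⁻¹(c(σ) − 1/q). Then the function σ ↦ ℓ_B(σ) − ℓ_A(σ) is strictly decreasing on ℝ; consequently, when unmanipulated features are uniformly distributed for both groups, the error-minimizing threshold in [σ_B, σ_A] is σ* = σ_A. -/

import Mathlib

/-- With strictly convex costs (c' strictly increasing) and proportional
group costs c_A = q·c (q ∈ (0,1)), the error interval length ℓ_B(σ) − ℓ_A(σ) is strictly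
decreasing in σ; consequently under uniform feature distributions the error-minimizing
threshold in [σ_B, σ_A] is σ_A. -/
theorem convex_costs_optimal_sigmaA (c c' : ℝ → ℝ)
    (hderiv : ∀ x, HasDerivAt c (c' x) x)
    (hpos : ∀ x, 0 < c' x)
    (hmono : StrictMono c) (hbij : Function.Bijective c)
    (hconvex : StrictMono c')
    (q : ℝ) (hq : q ∈ Set.Ioo (0 : ℝ) 1)
    (ℓB ℓA : ℝ → ℝ)
    (hℓB : ∀ σ, ℓB σ = Function.invFun c (c σ - 1))
    (hℓA : ∀ σ, ℓA σ = Function.invFun c (c σ - 1 / q)) :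
    StrictAnti (fun σ => ℓB σ - ℓA σ) ∧
    ∀ σB σA : ℝ, σB ≤ σA → ∀ σ ∈ Set.Icc σB σA,
      ℓB σA - ℓA σA ≤ ℓB σ - ℓA σ := by
  obtain ⟨hq0, hq1⟩ := hq
  set g := Function.invFun c with hg
  set e := StrictMono.orderIsoOfSurjective c hmono hbij.2 with he
  have hge : ∀ y, g y = e.symm y := by
    intro y
    have h1 : c (e.symm y) = y := StrictMono.orderIsoOfSurjective_self_symm_apply c hmono hbij.2 y
    have := Function.leftInverse_invFun hbij.1 (e.symm y)
    rw [h1] at this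
    exact this
  have hgc : Continuous g := by
    have : Continuous (e.symm : ℝ → ℝ) := e.symm.toHomeomorph.continuous
    exact this.congr fun y => (hge y).symm
  have hcg : ∀ y, c (g y) = y := Function.rightInverse_invFun hbij.2
  have hgmono : StrictMono g := by
    intro a b hab
    rw [hge a, hge b]
    exact e.symm.strictMono hab
  -- derivative of g
  have hgderiv : ∀ y, HasDerivAt g (c' (g y))⁻¹ y := by
    intro y
    exact HasDerivAt.of_local_left_inverse hgc.continuousAt (hderiv (g y))
      (ne_of_gt (hpos (g y))) (Filter.Eventually.of_forall hcg)
  have h1q : (1 : ℝ) < 1 / q := by rw [lt_div_iff₀ hq0]; linarith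
  -- derivative of ℓB - ℓA
  have hD : ∀ σ, HasDerivAt (fun σ => ℓB σ - ℓA σ)
      (c' σ * (c' (g (c σ - 1)))⁻¹ - c' σ * (c' (g (c σ - 1/q)))⁻¹) σ := by
    intro σ
    have hB : HasDerivAt (fun σ => g (c σ - 1)) (c' σ * (c' (g (c σ - 1)))⁻¹) σ := by
      have h1 : HasDerivAt (fun σ => c σ - 1) (c' σ) σ := (hderiv σ).sub_const 1
      have := (hgderiv (c σ - 1)).comp σ h1
      rw [mul_comm] at this
      exact this
    have hA : HasDerivAt (fun σ => g (c σ - 1/q)) (c' σ * (c' (g (c σ - 1/q)))⁻¹) σ := by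
      have h1 : HasDerivAt (fun σ => c σ - 1/q) (c' σ) σ := (hderiv σ).sub_const (1/q)
      have := (hgderiv (c σ - 1/q)).comp σ h1
      rw [mul_comm] at this
      exact this
    have hBfun : ℓB = fun σ => g (c σ - 1) := funext fun σ => hℓB σ
    have hAfun : ℓA = fun σ => g (c σ - 1/q) := funext fun σ => by rw [hℓA σ]
    rw [hBfun, hAfun]
    exact hB.sub hA
  have hneg : ∀ σ, c' σ * (c' (g (c σ - 1)))⁻¹ - c' σ * (c' (g (c σ - 1/q)))⁻¹ < 0 := by
    intro σ
    have hlt : g (c σ - 1/q) < g (c σ - 1) := hgmono (by linarith)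
    have hc' : c' (g (c σ - 1/q)) < c' (g (c σ - 1)) := hconvex hlt
    have h1 : (c' (g (c σ - 1)))⁻¹ < (c' (g (c σ - 1/q)))⁻¹ :=
      inv_strictAnti₀ (hpos _) hc'
    have := mul_lt_mul_of_pos_left h1 (hpos σ)
    linarith
  have hanti : StrictAnti (fun σ => ℓB σ - ℓA σ) :=
    strictAnti_of_hasDerivAt_neg hD hneg
  refine ⟨hanti, fun σB σA _ σ hσ => hanti.antitone hσ.2⟩
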